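/- Let n ≥ 4 be an even integer and let A, B be real numbers with −1 ≤ B < A ≤ 1 satisfying 2(1−B²) ≤ (n+1)(1−AB) ≤ (n+1)(1−B²) and (n+1)A ≤ 2B + n − 1. Then the open disk {w ∈ ℂ : |w − (1−AB)/(1−B²)| < (A−B)/(1−B²)} is contained in Ω_{nL} = φ_{nL}(𝔻). (Consequently the Janowski class S*[A,B] is contained in S*_{nL}.) -/

import Mathlib

open Complex Metric Set

/-- The function φ_{nL}(z) = 1 + n z/(n+1) + z^n/(n+1). -/
noncomputable def phinL (n : ℕ) (z : ℂ) : ℂ :=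
  1 + (n : ℂ) * z / ((n : ℂ) + 1) + z ^ n / ((n : ℂ) + 1)

/-- Ω_{nL} = φ_{nL}(𝔻), the image of the open unit disk. -/
def OmeganL (n : ℕ) : Set ℂ := phinL n '' ball (0 : ℂ) 1

/-- f is analytic on the unit disk with f(0) = 0 and f'(0) = 1. -/
def IsNormalizedAnalytic (f : ℂ → ℂ) : Prop :=
  AnalyticOnNhd ℂ f (ball (0 : ℂ) 1) ∧ f 0 = 0 ∧ deriv f 0 = 1

/-- p is subordinate to ψ on the unit disk. -/
def Subord (p ψ : ℂ → ℂ) : Prop :=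
  ∃ ω : ℂ → ℂ, AnalyticOnNhd ℂ ω (ball (0 : ℂ) 1) ∧ ω 0 = 0 ∧
    (∀ z ∈ ball (0 : ℂ) 1, ω z ∈ ball (0 : ℂ) 1) ∧
    (∀ z ∈ ball (0 : ℂ) 1, p z = ψ (ω z))

/-- Membership in the class S*_{nL}. -/
def MemSnL (n : ℕ) (f : ℂ → ℂ) : Prop :=
  IsNormalizedAnalytic f ∧ (∀ z ∈ ball (0 : ℂ) 1, z ≠ 0 → f z ≠ 0) ∧
  Subord (fun z => if z = 0 then 1 else z * deriv f z / f z) (phinL n)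

theorem stmt10 (n : ℕ) (hn : 4 ≤ n) (hne : Even n) (A B : ℝ)
    (hB : -1 ≤ B) (hBA : B < A) (hA : A ≤ 1)
    (h1 : 2 * (1 - B ^ 2) ≤ ((n : ℝ) + 1) * (1 - A * B))
    (h2 : ((n : ℝ) + 1) * (1 - A * B) ≤ ((n : ℝ) + 1) * (1 - B ^ 2))
    (h3 : ((n : ℝ) + 1) * A ≤ 2 * B + (n : ℝ) - 1) :
    ball ((((1 - A * B) / (1 - B ^ 2) : ℝ)) : ℂ) ((A - B) / (1 - B ^ 2)) ⊆ OmeganL n := by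
  have hn4 : (4:ℝ) ≤ (n:ℝ) := by exact_mod_cast hn
  have hn1 : (0:ℝ) < (n:ℝ) + 1 := by linarith
  set c : ℝ := (1 - A * B) / (1 - B ^ 2) with hc
  set r : ℝ := (A - B) / (1 - B ^ 2) with hr
  -- basic real facts
  have hB0 : 0 ≤ B := by
    by_contra h
    push_neg at h
    nlinarith [mul_pos hn1 (mul_pos (neg_pos.2 h) (sub_pos.2 hBA))]
  have hB1 : B < 1 := lt_of_lt_of_le hBA hA
  have hD : (0:ℝ) < 1 - B ^ 2 := by nlinarith
  have hrpos : 0 < r := div_pos (by linarith) hD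
  have hc1 : c ≤ 1 := by
    rw [hc, div_le_one hD]; nlinarith
  have hkey : r + (1 - c) ≤ ((n:ℝ) - 1) / ((n:ℝ) + 1) := by
    have e : r + (1 - c) = (A - B + (A*B - B^2)) / (1 - B^2) := by
      rw [hc, hr]; field_simp; try ring
    rw [e, div_le_div_iff₀ hD hn1]
    nlinarith [mul_le_mul_of_nonneg_right
      (show ((n:ℝ)+1)*(A-B) ≤ ((n:ℝ)-1)*(1-B) by nlinarith)
      (show (0:ℝ) ≤ 1 + B by linarith)]
  have hd0 : 0 ≤ 1 - c := by linarith
  have hq : ((n:ℝ)-1)/((n:ℝ)+1) * ((n:ℝ)+1) = (n:ℝ)-1 := div_mul_cancel₀ _ hn1.ne'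
  have hclo : 2 / ((n:ℝ) + 1) < c := by
    rw [div_lt_iff₀ hn1]
    nlinarith [mul_le_mul_of_nonneg_right hkey hn1.le, mul_pos hrpos hn1]
  -- complex constants
  have hnez : ((n:ℂ) + 1) ≠ 0 := by
    have : ((n+1 : ℕ) : ℂ) ≠ 0 := Nat.cast_ne_zero.2 (Nat.succ_ne_zero n)
    push_cast at this; exact this
  have hnorm1 : ‖((n:ℂ) + 1)‖ = (n:ℝ) + 1 := by
    rw [show ((n:ℂ)+1) = ((n+1:ℕ):ℂ) by push_cast; ring, Complex.norm_natCast]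
    push_cast; ring
  -- the real trace of phinL
  have hreal : ∀ t : ℝ, phinL n (t:ℂ)
      = ((1 + (n:ℝ) * t / ((n:ℝ)+1) + t ^ n / ((n:ℝ)+1) : ℝ) : ℂ) := by
    intro t; unfold phinL; push_cast; ring
  -- analyticity and continuity
  have hanal : AnalyticOnNhd ℂ (phinL n) univ := by
    intro z _
    unfold phinL
    exact ((analyticAt_const.add (((analyticAt_const.mul analyticAt_id)).div
      analyticAt_const hnez)).add ((analyticAt_id.pow n).div analyticAt_const hnez))
  have hcont : Continuous (phinL n) :=
    continuous_iff_continuousAt.2 fun z => (hanal z trivial).continuousAt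
  -- phinL is not constant
  have hnonconst : ¬ ∃ w, ∀ z ∈ (univ : Set ℂ), phinL n z = w := by
    rintro ⟨w, hw⟩
    have ha := hw ((0:ℝ):ℂ) (mem_univ _)
    have hb := hw (((1:ℝ)/2 :ℝ):ℂ) (mem_univ _)
    rw [hreal] at ha hb
    have h0 : ((1 + (n:ℝ) * 0 / ((n:ℝ)+1) + (0:ℝ) ^ n / ((n:ℝ)+1) : ℝ) : ℂ)
        = ((1 + (n:ℝ) * (1/2) / ((n:ℝ)+1) + ((1:ℝ)/2) ^ n / ((n:ℝ)+1) : ℝ) : ℂ) := by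
      rw [ha, hb]
    have h0' := Complex.ofReal_injective h0
    have hp : (0:ℝ) < ((1:ℝ)/2) ^ n := pow_pos (by norm_num) n
    have hz : (0:ℝ) ^ n = 0 := zero_pow (by omega)
    rw [hz] at h0'
    norm_num at h0'
    linarith [div_pos (show (0:ℝ) < (n:ℝ)*(1/2) by linarith) hn1, div_pos hp hn1]
  -- Omega is open
  have hopen : IsOpen (OmeganL n) := by
    rcases hanal.is_constant_or_isOpen isPreconnected_univ with h | h
    · exact absurd h hnonconst
    · exact h _ (subset_univ _) isOpen_ball
  -- key: points of the small ball in the closure of Omega are in Omega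
  have hkey2 : ∀ w ∈ ball ((c:ℝ):ℂ) r, w ∈ closure (OmeganL n) → w ∈ OmeganL n := by
    intro w hw hwc
    have hcl : closure (OmeganL n) ⊆ phinL n '' closedBall (0:ℂ) 1 := by
      apply closure_minimal (image_mono ball_subset_closedBall)
      exact ((isCompact_closedBall _ _).image hcont).isClosed
    obtain ⟨z, hz, rfl⟩ := hcl hwc
    have hz1 : ‖z‖ ≤ 1 := mem_closedBall_zero_iff.1 hz
    rcases lt_or_eq_of_le hz1 with hlt | heq
    · exact ⟨z, mem_ball_zero_iff.2 hlt, rfl⟩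
    · exfalso
      have hdist : ‖phinL n z - ((c:ℝ):ℂ)‖ < r := by
        rw [← dist_eq_norm]; exact mem_ball.1 hw
      have e : phinL n z - ((c:ℝ):ℂ)
          = ((n:ℂ)*z + z^n)/((n:ℂ)+1) - -(((1 - c : ℝ)):ℂ) := by
        unfold phinL
        field_simp
        push_cast
        ring
      have h5 : ((n:ℝ) - 1) ≤ ‖(n:ℂ)*z + z^n‖ := by
        have h6 := norm_sub_norm_le ((n:ℂ)*z) (-(z^n))
        rw [sub_neg_eq_add, norm_neg, norm_mul, norm_pow, Complex.norm_natCast, heq] at h6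
        simpa using h6
      have h7 : ((n:ℝ)-1)/((n:ℝ)+1) - (1 - c) ≤ ‖phinL n z - ((c:ℝ):ℂ)‖ := by
        rw [e]
        have h8 := norm_sub_norm_le (((n:ℂ)*z + z^n)/((n:ℂ)+1)) (-(((1 - c : ℝ)):ℂ))
        have h9 : ‖((n:ℂ)*z + z^n)/((n:ℂ)+1)‖ = ‖(n:ℂ)*z + z^n‖ / ((n:ℝ)+1) := by
          rw [norm_div, hnorm1]
        have h10 : ‖-(((1 - c : ℝ)):ℂ)‖ = 1 - c := by
          rw [norm_neg, Complex.norm_real, Real.norm_eq_abs, _root_.abs_of_nonneg hd0]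
        rw [h9, h10] at h8
        refine le_trans ?_ h8
        have : ((n:ℝ)-1)/((n:ℝ)+1) ≤ ‖(n:ℂ)*z + z^n‖ / ((n:ℝ)+1) := by gcongr
        linarith
      linarith
  -- the center c is in Omega (intermediate value theorem)
  have hcΩ : (((c:ℝ)):ℂ) ∈ OmeganL n := by
    set g : ℝ → ℝ := fun t => 1 + (n:ℝ) * t / ((n:ℝ)+1) + t ^ n / ((n:ℝ)+1) with hg
    have hgc : ContinuousOn g (Icc (-1) 1) := by
      apply Continuous.continuousOn
      fun_prop
    have hgm1 : g (-1) = 2 / ((n:ℝ)+1) := by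
      simp only [hg]
      rw [show ((-1:ℝ))^n = 1 from hne.neg_one_pow]
      field_simp
      try ring
    have hg1 : g 1 = 2 := by
      simp only [hg]
      rw [one_pow]
      field_simp
      try ring
    have hmem : c ∈ Icc (g (-1)) (g 1) := by
      rw [hgm1, hg1]; exact ⟨hclo.le, by linarith⟩
    obtain ⟨t, ht, hgt⟩ := intermediate_value_Icc (by norm_num : (-1:ℝ) ≤ 1) hgc hmem
    have htl : -1 < t := by
      rcases lt_or_eq_of_le ht.1 with h | h
      · exact h
      · exfalso; rw [← h, hgm1] at hgt; exact absurd hgt.symm (ne_of_gt hclo)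
    have htr : t < 1 := by
      rcases lt_or_eq_of_le ht.2 with h | h
      · exact h
      · exfalso; rw [h, hg1] at hgt; linarith
    refine ⟨(t:ℂ), ?_, ?_⟩
    · rw [mem_ball_zero_iff, Complex.norm_real, Real.norm_eq_abs, abs_lt]
      exact ⟨htl, htr⟩
    · rw [hreal t]; exact congrArg Complex.ofReal hgt
  -- connectedness argument
  intro w hw
  by_contra hwn
  have hwnc : w ∉ closure (OmeganL n) := fun h => hwn (hkey2 w hw h)
  have hpre : IsPreconnected (ball (((c:ℝ)):ℂ) r) := (convex_ball _ _).isPreconnected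
  obtain ⟨y, _, hy1, hy2⟩ := hpre (OmeganL n) (closure (OmeganL n))ᶜ hopen
    isClosed_closure.isOpen_compl
    (fun x hx => (em (x ∈ closure (OmeganL n))).elim
      (fun h => Or.inl (hkey2 x hx h)) Or.inr)
    ⟨(((c:ℝ)):ℂ), mem_ball_self hrpos, hcΩ⟩ ⟨w, hw, hwnc⟩
  exact hy2 (subset_closure hy1)
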